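/- If u_n → u almost everywhere and ‖u_n‖_{L^p} ≤ M < ∞ for all n, for some 1 ≤ p < ∞, then ‖u_n‖_{L^p}^p − ‖u_n − u‖_{L^p}^p → ‖u‖_{L^p}^p (Brezis–Lieb lemma for powers). -/

import Mathlib

open MeasureTheory Filter Topology

private lemma bl_split (p : ℝ) (hp0 : 0 < p) {δ x y : ℝ} (hδ : 0 < δ) (hx : 0 ≤ x)
    (hy : 0 ≤ y) : (x + y) ^ p ≤ (1 + δ) ^ p * x ^ p + (1 + δ⁻¹) ^ p * y ^ p := by
  rcases le_or_gt y (δ * x) with h | h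
  · have h1 : x + y ≤ (1 + δ) * x := by nlinarith
    calc (x + y) ^ p ≤ ((1 + δ) * x) ^ p := Real.rpow_le_rpow (by positivity) h1 hp0.le
      _ = (1 + δ) ^ p * x ^ p := Real.mul_rpow (by positivity) hx
      _ ≤ _ := le_add_of_nonneg_right (by positivity)
  · have hx' : x ≤ δ⁻¹ * y := by
      rw [le_inv_mul_iff₀ hδ]; exact h.le
    have h1 : x + y ≤ (1 + δ⁻¹) * y := by nlinarith
    calc (x + y) ^ p ≤ ((1 + δ⁻¹) * y) ^ p := Real.rpow_le_rpow (by positivity) h1 hp0.le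
      _ = (1 + δ⁻¹) ^ p * y ^ p := Real.mul_rpow (by positivity) hy
      _ ≤ _ := le_add_of_nonneg_left (by positivity)

private lemma bl_twop (p : ℝ) (hp0 : 0 < p) {x y : ℝ} (hx : 0 ≤ x) (hy : 0 ≤ y) :
    (x + y) ^ p ≤ 2 ^ p * (x ^ p + y ^ p) := by
  have := bl_split p hp0 one_pos hx hy
  norm_num at this
  linarith [this]

private lemma bl_key (p : ℝ) (hp : 1 ≤ p) {ε : ℝ} (hε : 0 < ε) :
    ∃ C : ℝ, 0 ≤ C ∧ ∀ a b : ℝ,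
      abs (|a + b| ^ p - |a| ^ p) ≤ ε * |a| ^ p + C * |b| ^ p := by
  have hp0 : (0:ℝ) < p := lt_of_lt_of_le one_pos hp
  have h2p : (0:ℝ) < 2 ^ p := Real.rpow_pos_of_pos two_pos p
  -- choose δ
  have hcont : ContinuousAt (fun δ : ℝ => (1 + δ) ^ p) 0 := by
    have h := Real.continuousAt_rpow_const (1 + 0) p (Or.inl (by norm_num))
    exact h.comp (by fun_prop)
  have h1 : Tendsto (fun δ : ℝ => (1 + δ) ^ p) (𝓝 0) (𝓝 1) := by
    simpa [Real.one_rpow] using hcont.tendsto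
  have h2 : ∀ᶠ δ : ℝ in 𝓝 0, (1 + δ) ^ p < 1 + ε / 2 ^ p :=
    h1.eventually_lt_const (lt_add_of_pos_right _ (div_pos hε h2p))
  have h3 : ∀ᶠ δ : ℝ in 𝓝[>] (0:ℝ), (1 + δ) ^ p < 1 + ε / 2 ^ p :=
    h2.filter_mono nhdsWithin_le_nhds
  obtain ⟨δ, hlt, hmem⟩ := (h3.and eventually_mem_nhdsWithin).exists
  have hδ : (0:ℝ) < δ := hmem
  set η : ℝ := (1 + δ) ^ p - 1 with hηdef
  have hηnn : 0 ≤ η := by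
    have : (1:ℝ) = 1 ^ p := (Real.one_rpow p).symm
    have h := Real.rpow_le_rpow (by norm_num) (by linarith : (1:ℝ) ≤ 1 + δ) hp0.le
    simp only [Real.one_rpow] at h
    simp [hηdef]; linarith
  have hη2 : η * 2 ^ p ≤ ε := by
    have : η < ε / 2 ^ p := by simp [hηdef]; linarith
    calc η * 2 ^ p ≤ ε / 2 ^ p * 2 ^ p := by nlinarith
      _ = ε := by field_simp
  have hηε : η ≤ ε := by
    have h2p1 : (1:ℝ) ≤ 2 ^ p := by
      have := Real.rpow_le_rpow (by norm_num) (by norm_num : (1:ℝ) ≤ 2) hp0.le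
      simpa using this
    nlinarith
  set D : ℝ := (1 + δ⁻¹) ^ p with hDdef
  have hDnn : 0 ≤ D := by positivity
  refine ⟨D + ε, by positivity, fun a b => ?_⟩
  have ha : (0:ℝ) ≤ |a| ^ p := by positivity
  have hb : (0:ℝ) ≤ |b| ^ p := by positivity
  have hab : (0:ℝ) ≤ |a + b| ^ p := by positivity
  rw [abs_sub_le_iff]
  have h1' : |a + b| ^ p ≤ (1 + δ) ^ p * |a| ^ p + D * |b| ^ p := by
    calc |a + b| ^ p ≤ (|a| + |b|) ^ p :=
          Real.rpow_le_rpow (abs_nonneg _) (abs_add_le a b) hp0.le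
      _ ≤ _ := bl_split p hp0 hδ (abs_nonneg _) (abs_nonneg _)
  have h3 : |a| ≤ |a + b| + |b| := by
    calc |a| = |(a + b) + (-b)| := by ring_nf
      _ ≤ |a + b| + |(-b)| := abs_add_le _ _
      _ = |a + b| + |b| := by rw [abs_neg]
  have h4 : |a| ^ p ≤ (1 + δ) ^ p * |a + b| ^ p + D * |b| ^ p := by
    calc |a| ^ p ≤ (|a + b| + |b|) ^ p := Real.rpow_le_rpow (abs_nonneg _) h3 hp0.le
      _ ≤ _ := bl_split p hp0 hδ (abs_nonneg _) (abs_nonneg _)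
  have h5 : |a + b| ^ p ≤ 2 ^ p * (|a| ^ p + |b| ^ p) := by
    calc |a + b| ^ p ≤ (|a| + |b|) ^ p :=
          Real.rpow_le_rpow (abs_nonneg _) (abs_add_le a b) hp0.le
      _ ≤ _ := bl_twop p hp0 (abs_nonneg _) (abs_nonneg _)
  constructor
  · nlinarith [mul_le_mul_of_nonneg_right hηε ha]
  · -- |a|^p - |a+b|^p ≤ η * |a+b|^p + D * |b|^p ≤ ...
    have k1 : η * |a + b| ^ p ≤ η * (2 ^ p * (|a| ^ p + |b| ^ p)) :=
      mul_le_mul_of_nonneg_left h5 hηnn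
    have k2 : η * (2 ^ p * (|a| ^ p + |b| ^ p)) ≤ ε * (|a| ^ p + |b| ^ p) := by
      rw [← mul_assoc]
      exact mul_le_mul_of_nonneg_right hη2 (by positivity)
    nlinarith

theorem brezis_lieb
    {α : Type*} [MeasurableSpace α] (μ : Measure α)
    (p : ℝ) (hp : 1 ≤ p) (M : ℝ)
    (u : ℕ → α → ℝ) (f : α → ℝ)
    (hu : ∀ n, MemLp (u n) (ENNReal.ofReal p) μ)
    (hf : Measurable f)
    (hae : ∀ᵐ x ∂μ, Tendsto (fun n => u n x) atTop (nhds (f x)))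
    (hbound : ∀ n, eLpNorm (u n) (ENNReal.ofReal p) μ ≤ ENNReal.ofReal M) :
    Tendsto (fun n => (∫ x, |u n x| ^ p ∂μ) - ∫ x, |u n x - f x| ^ p ∂μ)
      atTop (nhds (∫ x, |f x| ^ p ∂μ)) := by
  have hp0 : (0:ℝ) < p := lt_of_lt_of_le one_pos hp
  have hpe0 : ENNReal.ofReal p ≠ 0 := by
    simp [ENNReal.ofReal_eq_zero, not_le, hp0]
  have hpet : ENNReal.ofReal p ≠ ⊤ := ENNReal.ofReal_ne_top
  have hptr : (ENNReal.ofReal p).toReal = p := ENNReal.toReal_ofReal hp0.le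
  have hpe1 : (1:ENNReal) ≤ ENNReal.ofReal p := ENNReal.one_le_ofReal.mpr hp
  have hfm : AEStronglyMeasurable f μ := hf.aestronglyMeasurable
  -- f is in L^p with norm ≤ M
  have hflim : eLpNorm f (ENNReal.ofReal p) μ ≤ ENNReal.ofReal M := by
    refine (Lp.eLpNorm_lim_le_liminf_eLpNorm (fun n => (hu n).aestronglyMeasurable) f hae).trans ?_
    exact liminf_le_of_frequently_le (Frequently.of_forall hbound)
  have hfmem : MemLp f (ENNReal.ofReal p) μ :=
    ⟨hfm, lt_of_le_of_lt hflim ENNReal.ofReal_lt_top⟩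
  -- integrability
  have habs : ∀ (g : α → ℝ), MemLp g (ENNReal.ofReal p) μ →
      Integrable (fun x => |g x| ^ p) μ := by
    intro g hg
    simpa [hptr, Real.norm_eq_abs] using hg.integrable_norm_rpow hpe0 hpet
  have hI1 : ∀ n, Integrable (fun x => |u n x| ^ p) μ := fun n => habs _ (hu n)
  have humf : ∀ n, MemLp (fun x => u n x - f x) (ENNReal.ofReal p) μ := fun n =>
    (hu n).sub hfmem
  have hI2 : ∀ n, Integrable (fun x => |u n x - f x| ^ p) μ := fun n => habs _ (humf n)
  have hI3 : Integrable (fun x => |f x| ^ p) μ := habs _ hfmem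
  -- uniform bound on ∫ |u n - f|^p
  have hKex : ∃ K : ℝ, 0 ≤ K ∧ ∀ n, (∫ x, |u n x - f x| ^ p ∂μ) ≤ K := by
    set B : ENNReal := (ENNReal.ofReal M + eLpNorm f (ENNReal.ofReal p) μ) ^ p with hBdef
    have hBne : B ≠ ⊤ := by
      apply ENNReal.rpow_ne_top_of_nonneg hp0.le
      exact ENNReal.add_ne_top.mpr ⟨ENNReal.ofReal_ne_top, hfmem.2.ne⟩
    refine ⟨B.toReal, ENNReal.toReal_nonneg, fun n => ?_⟩
    have hofr : ENNReal.ofReal (∫ x, |u n x - f x| ^ p ∂μ) =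
        ∫⁻ x, (‖u n x - f x‖₊ : ENNReal) ^ p ∂μ := by
      rw [ofReal_integral_eq_lintegral_ofReal (hI2 n)
        (Eventually.of_forall fun x => by positivity)]
      congr 1
      ext x
      rw [← ENNReal.ofReal_rpow_of_nonneg (abs_nonneg _) hp0.le]
      congr 1
      rw [← Real.norm_eq_abs, ofReal_norm_eq_enorm]; rfl
    have help : ∫⁻ x, (‖u n x - f x‖₊ : ENNReal) ^ p ∂μ =
        (eLpNorm (fun x => u n x - f x) (ENNReal.ofReal p) μ) ^ p := by
      rw [eLpNorm_eq_lintegral_rpow_enorm_toReal hpe0 hpet, hptr, ← ENNReal.rpow_mul, one_div, inv_mul_cancel₀ hp0.ne', ENNReal.rpow_one]; rfl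
    have hle : ENNReal.ofReal (∫ x, |u n x - f x| ^ p ∂μ) ≤ B := by
      rw [hofr, help]
      apply ENNReal.rpow_le_rpow _ hp0.le
      calc eLpNorm (fun x => u n x - f x) (ENNReal.ofReal p) μ
          = eLpNorm (u n - f) (ENNReal.ofReal p) μ := rfl
        _ ≤ eLpNorm (u n) (ENNReal.ofReal p) μ + eLpNorm f (ENNReal.ofReal p) μ :=
            eLpNorm_sub_le (hu n).aestronglyMeasurable hfm hpe1
        _ ≤ ENNReal.ofReal M + eLpNorm f (ENNReal.ofReal p) μ :=
            add_le_add (hbound n) le_rfl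
    calc (∫ x, |u n x - f x| ^ p ∂μ)
        = (ENNReal.ofReal (∫ x, |u n x - f x| ^ p ∂μ)).toReal :=
          (ENNReal.toReal_ofReal (integral_nonneg fun x => by positivity)).symm
      _ ≤ B.toReal := ENNReal.toReal_mono hBne hle
  obtain ⟨K, hKnn, hK⟩ := hKex
  -- continuity of t ↦ |t|^p
  have hcontp : Continuous fun t : ℝ => |t| ^ p :=
    (Real.continuous_rpow_const hp0.le).comp continuous_abs
  -- the key convergence
  have key : Tendsto
      (fun n => ∫ x, (|u n x| ^ p - |u n x - f x| ^ p - |f x| ^ p) ∂μ) atTop (nhds 0) := by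
    rw [NormedAddCommGroup.tendsto_nhds_zero]
    intro ε' hε'
    set ε : ℝ := ε' / (2 * (K + 1)) with hεdef
    have hεpos : 0 < ε := by positivity
    obtain ⟨C, hCnn, hC⟩ := bl_key p hp hεpos
    -- pointwise functions
    set g : ℕ → α → ℝ := fun n x => |u n x| ^ p - |u n x - f x| ^ p - |f x| ^ p with hgdef
    set h : ℕ → α → ℝ := fun n x => max (|g n x| - ε * |u n x - f x| ^ p) 0 with hhdef
    have hIg : ∀ n, Integrable (g n) μ := fun n => ((hI1 n).sub (hI2 n)).sub hI3
    have hIh : ∀ n, Integrable (h n) μ := fun n =>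
      (((hIg n).abs.sub ((hI2 n).const_mul ε)).pos_part)
    -- pointwise bound on |g n x|
    have hgb : ∀ n x, |g n x| ≤ ε * |u n x - f x| ^ p + (C + 1) * |f x| ^ p := by
      intro n x
      have h1 : abs (|u n x| ^ p - |u n x - f x| ^ p) ≤
          ε * |u n x - f x| ^ p + C * |f x| ^ p := by
        have := hC (u n x - f x) (f x)
        simpa using this
      calc |g n x| ≤ abs (|u n x| ^ p - |u n x - f x| ^ p) + abs (|f x| ^ p) := by
            simp only [hgdef]; exact abs_sub _ _
        _ = abs (|u n x| ^ p - |u n x - f x| ^ p) + |f x| ^ p := by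
            rw [abs_of_nonneg (by positivity : (0:ℝ) ≤ |f x| ^ p)]
        _ ≤ ε * |u n x - f x| ^ p + C * |f x| ^ p + |f x| ^ p := by linarith
        _ = ε * |u n x - f x| ^ p + (C + 1) * |f x| ^ p := by ring
    -- ∫ h n → 0 by dominated convergence
    have hlim : ∀ᵐ x ∂μ, Tendsto (fun n => h n x) atTop (nhds ((fun _ => (0:ℝ)) x)) := by
      refine hae.mono fun x hx => ?_
      have t1 : Tendsto (fun n => |u n x| ^ p) atTop (nhds (|f x| ^ p)) :=
        (hcontp.continuousAt.tendsto).comp hx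
      have t2 : Tendsto (fun n => u n x - f x) atTop (nhds 0) := by
        simpa using hx.sub (tendsto_const_nhds (x := f x))
      have t3 : Tendsto (fun n => |u n x - f x| ^ p) atTop (nhds 0) := by
        have := (hcontp.continuousAt.tendsto).comp t2
        simpa [Function.comp_def, abs_zero, Real.zero_rpow hp0.ne'] using this
      have tg : Tendsto (fun n => g n x) atTop (nhds 0) := by
        have := (t1.sub t3).sub (tendsto_const_nhds (x := |f x| ^ p))
        simpa [hgdef] using this
      have : Tendsto (fun n => h n x) atTop (nhds (max (|(0:ℝ)| - ε * 0) 0)) :=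
        Tendsto.max ((tg.abs).sub (t3.const_mul ε)) tendsto_const_nhds
      simpa using this
    have hb : ∀ n, ∀ᵐ x ∂μ, ‖h n x‖ ≤ (C + 1) * |f x| ^ p := by
      intro n
      refine Eventually.of_forall fun x => ?_
      have hbx := hgb n x
      have : h n x ≤ (C + 1) * |f x| ^ p :=
        max_le (by linarith) (by positivity)
      rw [Real.norm_eq_abs, abs_of_nonneg (le_max_right _ _)]
      exact this
    have hh0 : Tendsto (fun n => ∫ x, h n x ∂μ) atTop (nhds 0) := by
      have := tendsto_integral_of_dominated_convergence
        (fun x => (C + 1) * |f x| ^ p)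
        (fun n => (hIh n).aestronglyMeasurable)
        (hI3.const_mul (C + 1)) hb hlim
      simpa using this
    have hev : ∀ᶠ n in atTop, (∫ x, h n x ∂μ) < ε' / 2 :=
      hh0.eventually_lt_const (by positivity)
    filter_upwards [hev] with n hn
    have hbound1 : ‖∫ x, g n x ∂μ‖ ≤ ∫ x, |g n x| ∂μ := by
      simpa [Real.norm_eq_abs] using norm_integral_le_integral_norm (g n)
    have hgle : ∀ x, |g n x| ≤ h n x + ε * |u n x - f x| ^ p := by
      intro x
      have := le_max_left (|g n x| - ε * |u n x - f x| ^ p) 0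
      linarith
    have hint : (∫ x, |g n x| ∂μ) ≤ (∫ x, h n x ∂μ) + ε * ∫ x, |u n x - f x| ^ p ∂μ := by
      have := integral_mono (hIg n).abs ((hIh n).add ((hI2 n).const_mul ε)) hgle
      simp only [Pi.add_apply] at this
      rwa [integral_add (hIh n) ((hI2 n).const_mul ε), integral_const_mul] at this
    have hεK : ε * (∫ x, |u n x - f x| ^ p ∂μ) ≤ ε * K :=
      mul_le_mul_of_nonneg_left (hK n) hεpos.le
    have hεK2 : ε * K < ε' / 2 := by
      have : ε * (K + 1) = ε' / 2 := by
        field_simp [hεdef]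
        rw [hεdef]; field_simp
      nlinarith
    calc ‖∫ x, g n x ∂μ‖ ≤ ∫ x, |g n x| ∂μ := hbound1
      _ ≤ (∫ x, h n x ∂μ) + ε * ∫ x, |u n x - f x| ^ p ∂μ := hint
      _ < ε' / 2 + ε' / 2 := by
          have := lt_of_le_of_lt hεK hεK2
          linarith
      _ = ε' := by ring
  -- conclude
  have heq : (fun n => ∫ x, (|u n x| ^ p - |u n x - f x| ^ p - |f x| ^ p) ∂μ) =
      fun n => ((∫ x, |u n x| ^ p ∂μ) - ∫ x, |u n x - f x| ^ p ∂μ) - ∫ x, |f x| ^ p ∂μ := by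
    funext n
    have e2 : (∫ x, (|u n x| ^ p - |u n x - f x| ^ p) ∂μ) =
        (∫ x, |u n x| ^ p ∂μ) - ∫ x, |u n x - f x| ^ p ∂μ := integral_sub (hI1 n) (hI2 n)
    have e1 : (∫ x, ((|u n x| ^ p - |u n x - f x| ^ p) - |f x| ^ p) ∂μ) =
        (∫ x, (|u n x| ^ p - |u n x - f x| ^ p) ∂μ) - ∫ x, |f x| ^ p ∂μ :=
      integral_sub ((hI1 n).sub (hI2 n)) hI3
    rw [e1, e2]
  rw [heq] at key
  exact tendsto_sub_nhds_zero_iff.mp key
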